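/- For every dual path a_1, …, a_n, there exists a crossing diagram c such that the set of labels {φ(a_1), …, φ(a_n)} equals the set of paths of c. (That is, the labels of the arrows along any path in the dual quiver between the two external vertices are the set of partitions associated to some crossing diagram.) -/

import Mathlib

/-- `lam : ℕ → ℕ` is a partition in the `r × (n-r)` box, with the conventions
`lam 0 = n - r` and `lam t = 0` for `t > r` built in. -/
def IsPartition (n r : ℕ) (lam : ℕ → ℕ) : Prop :=
  lam 0 = n - r ∧ (∀ t, r < t → lam t = 0) ∧ ∀ t, lam (t + 1) ≤ lam t

/-- The edge set `E(λ)` of the monotone lattice path of the partition `λ`. -/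
def pathEdges (r : ℕ) (lam : ℕ → ℕ) : Set ((ℕ × ℕ) × Bool) :=
  {e | (∃ t, 1 ≤ t ∧ t ≤ r ∧ e = ((lam t, r - t), true)) ∨
       (∃ t x, t ≤ r ∧ lam (t + 1) ≤ x ∧ x + 1 ≤ lam t ∧ e = ((x, r - t), false))}

/-- The internal ladder vertices `V° = {1,…,k-1} × {1,…,r-1}`. -/
def internalV (n r : ℕ) : Set (ℕ × ℕ) :=
  {p | 1 ≤ p.1 ∧ p.1 + 1 ≤ n - r ∧ 1 ≤ p.2 ∧ p.2 + 1 ≤ r}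

/-- The two endpoints of an edge. -/
def edgePts (e : (ℕ × ℕ) × Bool) : Set (ℕ × ℕ) :=
  {e.1, if e.2 then (e.1.1, e.1.2 + 1) else (e.1.1 + 1, e.1.2)}

/-- `λ` is a path of the crossing diagram `c : V° → {X, O}` (here `true = X`,
`false = O`). -/
def IsCrossingPath (n r : ℕ) (c : ℕ × ℕ → Bool) (lam : ℕ → ℕ) : Prop :=
  ∀ p ∈ internalV n r,
    (c p = true → ∀ e ∈ pathEdges r lam, p ∈ edgePts e →
      ∀ f ∈ pathEdges r lam, p ∈ edgePts f → e.2 = f.2) ∧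
    (c p = false → ∀ e ∈ pathEdges r lam, p ∈ edgePts e →
      ∀ f ∈ pathEdges r lam, p ∈ edgePts f → e ≠ f → e.2 ≠ f.2)

/-- The arrows of the dual quiver. -/
inductive DArrow where
  | horiz (t j : ℕ)
  | vert (t j : ℕ)
  | inAr
  | outAr
deriving DecidableEq

/-- The index constraints making a `DArrow` an actual arrow of the dual quiver. -/
def DArrow.valid (n r : ℕ) : DArrow → Prop
  | .horiz t j => 1 ≤ t ∧ t ≤ r ∧ 1 ≤ j ∧ j + 1 ≤ n - r
  | .vert t j => 1 ≤ t ∧ t + 1 ≤ r ∧ 1 ≤ j ∧ j ≤ n - r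
  | .inAr => True
  | .outAr => True

/-- The labeling `φ : 𝒟 → 𝒫(n,r)`: `φ(in) = (k^r)`, `φ(out) = ∅`,
`φ(horiz (t,j)) = ((k-j+1)^{r-t}, (k-j)^t)`, `φ(vert (t,j)) = (k^{r-t-1}, k-j+1, 0^t)`. -/
def DArrow.label (n r : ℕ) : DArrow → (ℕ → ℕ)
  | .inAr => fun s => if s ≤ r then n - r else 0
  | .outAr => fun s => if s = 0 then n - r else 0
  | .horiz t j => fun s =>
      if s = 0 then n - r
      else if s + t ≤ r then n - r - j + 1
      else if s ≤ r then n - r - j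
      else 0
  | .vert t j => fun s =>
      if s = 0 then n - r
      else if s + t < r then n - r
      else if s + t = r then n - r - j + 1
      else 0

/-- The source box of a dual arrow (`(0,0)` is the placeholder for the external vertex). -/
def DArrow.srcBox (n r : ℕ) : DArrow → ℕ × ℕ
  | .horiz t j => (t, j)
  | .vert t j => (t, j)
  | .inAr => (0, 0)
  | .outAr => (r, n - r)

/-- The target box of a dual arrow (`(0,0)` is the placeholder for the external vertex). -/
def DArrow.tgtBox (n r : ℕ) : DArrow → ℕ × ℕ
  | .horiz t j => (t, j + 1)
  | .vert t j => (t + 1, j)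
  | .inAr => (1, 1)
  | .outAr => (0, 0)

/-- The "O" condition of the crossing diagram built from descent columns `d`. -/
def Oc (k : ℕ) (d : ℕ → ℕ) (x y : ℕ) : Prop :=
  k + 1 ≤ x + d y ∧ x + d (y - 1) ≤ k + 1

/-- The crossing diagram built from descent columns `d`. -/
def cD (k : ℕ) (d : ℕ → ℕ) : ℕ × ℕ → Bool :=
  fun p => !(decide (k + 1 ≤ p.1 + d p.2) && decide (p.1 + d (p.2 - 1) ≤ k + 1))

lemma cD_false_iff (k : ℕ) (d : ℕ → ℕ) (p : ℕ × ℕ) :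
    cD k d p = false ↔ Oc k d p.1 p.2 := by
  simp [cD, Oc]

lemma cD_true_iff (k : ℕ) (d : ℕ → ℕ) (p : ℕ × ℕ) :
    cD k d p = true ↔ ¬ Oc k d p.1 p.2 := by
  simp [cD, Oc, imp_iff_not_or]

/-- `λ` turns at the point `(x,y)`. -/
def Turn (r : ℕ) (lam : ℕ → ℕ) (x y : ℕ) : Prop :=
  (lam (r - y + 1) = x ∧ x < lam (r - y)) ∨ (lam (r - y + 1) < x ∧ lam (r - y) = x)

/-- Clean arithmetic form of the crossing-path condition. -/
def CPiff (n r : ℕ) (d lam : ℕ → ℕ) : Prop :=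
  ∀ x y : ℕ, 1 ≤ x → x + 1 ≤ n - r → 1 ≤ y → y + 1 ≤ r →
    lam (r - y + 1) ≤ x → x ≤ lam (r - y) →
    (Oc (n - r) d x y ↔ Turn r lam x y)

lemma edges_at (r : ℕ) (lam : ℕ → ℕ) (x y : ℕ)
    (hy1 : 1 ≤ y) (hy2 : y + 1 ≤ r) (hx1 : 1 ≤ x)
    (e : (ℕ × ℕ) × Bool) (he : e ∈ pathEdges r lam) (hpe : (x, y) ∈ edgePts e) :
    (e = ((x, y), true) ∧ lam (r - y) = x) ∨
    (e = ((x, y - 1), true) ∧ lam (r - y + 1) = x) ∨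
    (e = ((x, y), false) ∧ lam (r - y + 1) ≤ x ∧ x + 1 ≤ lam (r - y)) ∨
    (e = ((x - 1, y), false) ∧ lam (r - y + 1) ≤ x - 1 ∧ x ≤ lam (r - y)) := by
  rcases he with ⟨t, ht1, ht2, rfl⟩ | ⟨t, x', ht, hx'1, hx'2, rfl⟩
  · simp only [edgePts, Set.mem_insert_iff, Set.mem_singleton_iff, if_pos,
      Prod.mk.injEq] at hpe
    rcases hpe with ⟨hx, hy⟩ | ⟨hx, hy⟩
    · have hteq : t = r - y := by omega
      left
      refine ⟨?_, by rw [← hteq]; omega⟩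
      simp only [Prod.mk.injEq]
      exact ⟨⟨by omega, by omega⟩, trivial⟩
    · have hteq : t = r - y + 1 := by omega
      right; left
      refine ⟨?_, by rw [← hteq]; omega⟩
      simp only [Prod.mk.injEq]
      exact ⟨⟨by omega, by omega⟩, trivial⟩
  · simp only [edgePts, Set.mem_insert_iff, Set.mem_singleton_iff, if_neg Bool.false_ne_true,
      Prod.mk.injEq] at hpe
    have hteq : t = r - y := by rcases hpe with ⟨hx, hy⟩ | ⟨hx, hy⟩ <;> omega
    subst hteq
    rcases hpe with ⟨hx, hy⟩ | ⟨hx, hy⟩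
    · right; right; left
      refine ⟨?_, by omega, by omega⟩
      simp only [Prod.mk.injEq]
      exact ⟨⟨by omega, by omega⟩, trivial⟩
    · right; right; right
      refine ⟨?_, by omega, by omega⟩
      simp only [Prod.mk.injEq]
      exact ⟨⟨by omega, by omega⟩, trivial⟩

lemma mem_up (r : ℕ) (lam : ℕ → ℕ) (x y : ℕ) (hy1 : 1 ≤ y) (hy2 : y + 1 ≤ r)
    (h : lam (r - y) = x) : (((x, y), true) : (ℕ × ℕ) × Bool) ∈ pathEdges r lam := by
  left; exact ⟨r - y, by omega, by omega, by rw [h]; congr 2; omega⟩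

lemma mem_dn (r : ℕ) (lam : ℕ → ℕ) (x y : ℕ) (hy1 : 1 ≤ y) (hy2 : y + 1 ≤ r)
    (h : lam (r - y + 1) = x) : (((x, y - 1), true) : (ℕ × ℕ) × Bool) ∈ pathEdges r lam := by
  left; exact ⟨r - y + 1, by omega, by omega, by rw [h]; congr 2; omega⟩

lemma mem_rt (r : ℕ) (lam : ℕ → ℕ) (x y : ℕ) (hy2 : y + 1 ≤ r)
    (h1 : lam (r - y + 1) ≤ x) (h2 : x + 1 ≤ lam (r - y)) :
    (((x, y), false) : (ℕ × ℕ) × Bool) ∈ pathEdges r lam := by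
  right; exact ⟨r - y, x, by omega, h1, h2, by congr 2; omega⟩

lemma mem_lf (r : ℕ) (lam : ℕ → ℕ) (x y : ℕ) (hx : 1 ≤ x) (hy2 : y + 1 ≤ r)
    (h1 : lam (r - y + 1) + 1 ≤ x) (h2 : x ≤ lam (r - y)) :
    (((x - 1, y), false) : (ℕ × ℕ) × Bool) ∈ pathEdges r lam := by
  right; exact ⟨r - y, x - 1, by omega, by omega, by omega, by congr 2; omega⟩

lemma pt_up (x y : ℕ) : (x, y) ∈ edgePts ((((x, y), true)) : (ℕ × ℕ) × Bool) := by
  left; rfl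

lemma pt_dn (x y : ℕ) (hy : 1 ≤ y) :
    (x, y) ∈ edgePts ((((x, y - 1), true)) : (ℕ × ℕ) × Bool) := by
  right; simp; omega

lemma pt_rt (x y : ℕ) : (x, y) ∈ edgePts ((((x, y), false)) : (ℕ × ℕ) × Bool) := by
  left; rfl

lemma pt_lf (x y : ℕ) (hx : 1 ≤ x) :
    (x, y) ∈ edgePts ((((x - 1, y), false)) : (ℕ × ℕ) × Bool) := by
  right; simp; omega
lemma CP_of (n r : ℕ) (d lam : ℕ → ℕ) (hmono : ∀ s, lam (s + 1) ≤ lam s)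
    (hiff : CPiff n r d lam) : IsCrossingPath n r (cD (n - r) d) lam := by
  rintro ⟨x, y⟩ ⟨hx1, hx2, hy1, hy2⟩
  simp only at hx1 hx2 hy1 hy2
  have hm := hmono (r - y)
  have hry : r - y + 1 = r - y + 1 := rfl
  constructor
  · intro hX e he hpe f hf hpf
    have hO : ¬ Oc (n - r) d x y := (cD_true_iff (n - r) d (x, y)).1 hX
    have hce := edges_at r lam x y hy1 hy2 hx1 e he hpe
    have hcf := edges_at r lam x y hy1 hy2 hx1 f hf hpf
    rcases hce with ⟨rfl, h1⟩ | ⟨rfl, h1⟩ | ⟨rfl, h1, h2⟩ | ⟨rfl, h1, h2⟩ <;>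
      rcases hcf with ⟨rfl, g1⟩ | ⟨rfl, g1⟩ | ⟨rfl, g1, g2⟩ | ⟨rfl, g1, g2⟩ <;>
      first
        | rfl
        | (exfalso; omega)
        | (exfalso
           refine hO ((hiff x y hx1 hx2 hy1 hy2 (by omega) (by omega)).2 ?_)
           first
             | exact Or.inl ⟨by omega, by omega⟩
             | exact Or.inr ⟨by omega, by omega⟩)
  · intro hXO e he hpe f hf hpf hnef
    have hO : Oc (n - r) d x y := (cD_false_iff (n - r) d (x, y)).1 hXO
    have hce := edges_at r lam x y hy1 hy2 hx1 e he hpe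
    have hcf := edges_at r lam x y hy1 hy2 hx1 f hf hpf
    have hT : Turn r lam x y := by
      refine (hiff x y hx1 hx2 hy1 hy2 ?_ ?_).1 hO <;>
        rcases hce with ⟨rfl, h1⟩ | ⟨rfl, h1⟩ | ⟨rfl, h1, h2⟩ | ⟨rfl, h1, h2⟩ <;> omega
    rcases hce with ⟨rfl, h1⟩ | ⟨rfl, h1⟩ | ⟨rfl, h1, h2⟩ | ⟨rfl, h1, h2⟩ <;>
      rcases hcf with ⟨rfl, g1⟩ | ⟨rfl, g1⟩ | ⟨rfl, g1, g2⟩ | ⟨rfl, g1, g2⟩ <;>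
      first
        | exact absurd rfl hnef
        | (exfalso; rcases hT with ⟨a, b⟩ | ⟨a, b⟩ <;> omega)
        | (intro hb; exact absurd hb (by simp))

lemma CP_to (n r : ℕ) (d lam : ℕ → ℕ) (hmono : ∀ s, lam (s + 1) ≤ lam s)
    (hcp : IsCrossingPath n r (cD (n - r) d) lam) : CPiff n r d lam := by
  intro x y hx1 hx2 hy1 hy2 hl hu
  have hint : (x, y) ∈ internalV n r := ⟨hx1, hx2, hy1, hy2⟩
  obtain ⟨hXc, hOc⟩ := hcp (x, y) hint
  constructor
  · intro hO
    have hc : cD (n - r) d (x, y) = false := (cD_false_iff _ _ _).2 hO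
    rcases eq_or_lt_of_le hl with he1 | hlt1
    · rcases eq_or_lt_of_le hu with he2 | hlt2
      · exfalso
        have h := hOc hc _ (mem_up r lam x y hy1 hy2 he2.symm) (pt_up x y)
          _ (mem_dn r lam x y hy1 hy2 he1) (pt_dn x y hy1)
          (by simp only [ne_eq, Prod.mk.injEq]; omega)
        simp at h
      · exact Or.inl ⟨he1, hlt2⟩
    · rcases eq_or_lt_of_le hu with he2 | hlt2
      · exact Or.inr ⟨hlt1, he2.symm⟩
      · exfalso
        have h := hOc hc _ (mem_rt r lam x y hy2 hl hlt2) (pt_rt x y)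
          _ (mem_lf r lam x y hx1 hy2 hlt1 hu) (pt_lf x y hx1)
          (by simp only [ne_eq, Prod.mk.injEq]; omega)
        simp at h
  · intro hT
    rw [← cD_false_iff (n - r) d (x, y)]
    cases hc : cD (n - r) d (x, y)
    · rfl
    · exfalso
      rcases hT with ⟨h1, h2⟩ | ⟨h1, h2⟩
      · have h := hXc hc _ (mem_dn r lam x y hy1 hy2 h1) (pt_dn x y hy1)
          _ (mem_rt r lam x y hy2 (le_of_eq h1) h2) (pt_rt x y)
        simp at h
      · have h := hXc hc _ (mem_up r lam x y hy1 hy2 h2) (pt_up x y)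
          _ (mem_lf r lam x y hx1 hy2 h1 (le_of_eq h2.symm)) (pt_lf x y hx1)
        simp at h
lemma part_in (n r : ℕ) : IsPartition n r (DArrow.label n r .inAr) := by
  refine ⟨by simp [DArrow.label], fun t ht => ?_, fun s => ?_⟩ <;>
    simp only [DArrow.label] <;> split_ifs <;> first | omega | exact ‹False›.elim

lemma part_out (n r : ℕ) : IsPartition n r (DArrow.label n r .outAr) := by
  refine ⟨by simp [DArrow.label], fun t ht => ?_, fun s => ?_⟩ <;>
    simp only [DArrow.label] <;> split_ifs <;> first | omega | exact ‹False›.elim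

lemma part_horiz (n r t j : ℕ) (ht1 : 1 ≤ t) (htr : t ≤ r) (hj1 : 1 ≤ j) (hj2 : j + 1 ≤ n - r) :
    IsPartition n r (DArrow.label n r (.horiz t j)) := by
  refine ⟨by simp [DArrow.label], fun s hs => ?_, fun s => ?_⟩ <;>
    simp only [DArrow.label] <;> split_ifs <;> first | omega | exact ‹False›.elim

lemma part_vert (n r t j : ℕ) (ht1 : 1 ≤ t) (htr : t + 1 ≤ r) (hj1 : 1 ≤ j) (hj2 : j ≤ n - r) :
    IsPartition n r (DArrow.label n r (.vert t j)) := by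
  refine ⟨by simp [DArrow.label], fun s hs => ?_, fun s => ?_⟩ <;>
    simp only [DArrow.label] <;> split_ifs <;> first | omega | exact ‹False›.elim

lemma cpiff_in (n r : ℕ) (d : ℕ → ℕ) : CPiff n r d (DArrow.label n r .inAr) := by
  intro x y hx1 hx2 hy1 hy2 hl hu
  exfalso
  simp only [DArrow.label] at hl
  rw [if_pos (by omega)] at hl
  omega

lemma cpiff_out (n r : ℕ) (d : ℕ → ℕ) : CPiff n r d (DArrow.label n r .outAr) := by
  intro x y hx1 hx2 hy1 hy2 hl hu
  exfalso
  simp only [DArrow.label] at hu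
  rw [if_neg (by omega)] at hu
  omega

set_option maxHeartbeats 1000000 in
lemma cpiff_horiz (n r t j : ℕ) (d : ℕ → ℕ)
    (hdmono : ∀ s u, s ≤ u → d s ≤ d u)
    (ht1 : 1 ≤ t) (htr : t ≤ r) (hj1 : 1 ≤ j) (hj2 : j + 1 ≤ n - r)
    (hd1 : d (t - 1) ≤ j) (hd2 : j + 1 ≤ d t) :
    CPiff n r d (DArrow.label n r (.horiz t j)) := by
  intro x y hx1 hx2 hy1 hy2 hl hu
  simp only [DArrow.label] at hl hu
  simp only [Oc, Turn, DArrow.label]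
  rcases lt_trichotomy y t with hc | hc | hc
  · have m1 : d y ≤ d (t - 1) := hdmono y (t - 1) (by omega)
    split_ifs at hl hu ⊢ <;> first | omega | exact ‹False›.elim
  · subst hc
    split_ifs at hl hu ⊢ <;> first | omega | exact ‹False›.elim
  · have m3 : d t ≤ d (y - 1) := hdmono t (y - 1) (by omega)
    split_ifs at hl hu ⊢ <;> first | omega | exact ‹False›.elim

set_option maxHeartbeats 1000000 in
lemma cpiff_vert (n r t j : ℕ) (d : ℕ → ℕ)
    (hdmono : ∀ s u, s ≤ u → d s ≤ d u)
    (ht1 : 1 ≤ t) (htr : t + 1 ≤ r) (hj1 : 1 ≤ j) (hj2 : j ≤ n - r)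
    (hjd : j = d t) :
    CPiff n r d (DArrow.label n r (.vert t j)) := by
  intro x y hx1 hx2 hy1 hy2 hl hu
  simp only [DArrow.label] at hl hu
  simp only [Oc, Turn, DArrow.label]
  rcases lt_trichotomy y t with hc | hc | hc
  · split_ifs at hl hu ⊢ <;> first | omega | exact ‹False›.elim
  · subst hc
    have m2 : d (y - 1) ≤ d y := hdmono (y - 1) y (by omega)
    split_ifs at hl hu ⊢ <;> first | omega | exact ‹False›.elim
  · rcases eq_or_lt_of_le (show t + 1 ≤ y from hc) with hc2 | hc2
    · have hyt : y = t + 1 := by omega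
      subst hyt
      have m1 : d t ≤ d (t + 1) := hdmono t (t + 1) (by omega)
      have hdd : d (t + 1 - 1) = d t := by norm_num
      split_ifs at hl hu ⊢ <;> first | omega | exact ‹False›.elim
    · split_ifs at hl hu ⊢ <;> first | omega | exact ‹False›.elim
set_option maxHeartbeats 2000000 in
lemma classify (n r : ℕ) (hr : 1 ≤ r) (hrn : r < n) (d : ℕ → ℕ)
    (hd0 : d 0 = 1) (hdr : d r = n - r)
    (hdmono : ∀ s u, s ≤ u → d s ≤ d u)
    (hdlb : ∀ s, 1 ≤ d s) (hdub : ∀ s, d s ≤ n - r)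
    (lam : ℕ → ℕ) (hpart : IsPartition n r lam)
    (hcp : CPiff n r d lam) :
    lam = DArrow.label n r .inAr ∨ lam = DArrow.label n r .outAr ∨
    (∃ t j, 1 ≤ t ∧ t ≤ r ∧ d (t - 1) ≤ j ∧ j + 1 ≤ d t ∧
      lam = DArrow.label n r (.horiz t j)) ∨
    (∃ t, 1 ≤ t ∧ t + 1 ≤ r ∧ lam = DArrow.label n r (.vert t (d t))) := by
  obtain ⟨h0, hz, hmono⟩ := hpart
  have hk : 1 ≤ n - r := by omega
  have hanti : ∀ s u, s ≤ u → lam u ≤ lam s := by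
    intro s u h
    induction u, h using Nat.le_induction with
    | base => exact le_rfl
    | succ u hu ih => exact le_trans (hmono u) ih
  have hcpAt : ∀ A x, 1 ≤ A → A + 1 ≤ r → 1 ≤ x → x + 1 ≤ n - r →
      lam (A + 1) ≤ x → x ≤ lam A →
      (Oc (n - r) d x (r - A) ↔
        ((lam (A + 1) = x ∧ x < lam A) ∨ (lam (A + 1) < x ∧ lam A = x))) := by
    intro A x hA1 hA2 hx1 hx2 hl hu
    have h1 : r - (r - A) = A := by omega
    have := hcp x (r - A) hx1 hx2 (by omega) (by omega)
      (by rw [show r - (r - A) + 1 = A + 1 by omega]; exact hl)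
      (by rw [h1]; exact hu)
    simpa [Turn, h1] using this
  by_cases hzr : lam r = 0
  · -- bottom value 0 : out-label or vert-label
    by_cases h1z : lam 1 = 0
    · right; left
      funext s
      simp only [DArrow.label]
      split_ifs with hs
      · rw [hs]; exact h0
      · have := hanti 1 s (by omega)
        omega
    · have hex : ∃ s, lam s = 0 := ⟨r, hzr⟩
      set T := Nat.find hex with hTdef
      have hT0 : lam T = 0 := Nat.find_spec hex
      have hTr : T ≤ r := Nat.find_min' hex hzr
      have hT2 : 2 ≤ T := by
        rcases Nat.lt_or_ge T 2 with h | h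
        · exfalso
          have h01 : T = 0 ∨ T = 1 := by omega
          rcases h01 with h' | h' <;> rw [h'] at hT0 <;> omega
        · exact h
      set B := T - 1 with hBdef
      have hB1 : 1 ≤ B := by omega
      have hBr : B + 1 ≤ r := by omega
      have hBu : lam B ≠ 0 := Nat.find_min hex (by omega)
      have hB1z : lam (B + 1) = 0 := by rw [show B + 1 = T by omega]; exact hT0
      set u := lam B with hudef
      have hu1 : 1 ≤ u := by omega
      have huk : u ≤ n - r := by have := hanti 0 B (by omega); omega
      -- u + d (r - B) = n - r + 1
      have hge : n - r + 1 ≤ u + d (r - B) := by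
        rcases Nat.lt_or_ge u (n - r) with hlt | hge2
        · have hO := (hcpAt B u hB1 hBr hu1 (by omega) (by omega) le_rfl).2
            (Or.inr ⟨by omega, rfl⟩)
          obtain ⟨hO1, hO2⟩ := hO
          omega
        · have := hdlb (r - B); omega
      have hle : u + d (r - B) ≤ n - r + 1 := by
        by_contra hgt
        set x0 := n - r + 1 - d (r - B) with hx0def
        have hd1 := hdlb (r - B)
        have hd2 := hdub (r - B)
        have hmm := hdmono (r - B - 1) (r - B) (by omega)
        have hnO := (hcpAt B x0 hB1 hBr (by omega) (by omega) (by omega) (by omega)).1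
          ⟨by omega, by omega⟩
        omega
      -- everything above B equals n - r
      have hup : ∀ mm A, B ≤ A + mm → 1 ≤ A → A + 1 ≤ B → lam A = n - r := by
        intro mm
        induction mm with
        | zero => intro A h1 h2 h3; omega
        | succ mm ih =>
          intro A h1 h2 h3
          have hA1 : lam (A + 1) = if A + 1 = B then u else n - r := by
            rcases eq_or_lt_of_le h3 with he | hlt
            · rw [if_pos he, he]
            · rw [if_neg (by omega)]
              exact ih (A + 1) (by omega) (by omega) (by omega)
          by_contra hne
          have hla : lam (A + 1) ≤ lam A := hanti A (A + 1) (by omega)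
          have hlak : lam A ≤ n - r := by have := hanti 0 A (by omega); omega
          split_ifs at hA1 with hAB
          · -- A + 1 = B
            have hrb : r - A - 1 = r - B := by omega
            rcases eq_or_lt_of_le (hA1 ▸ hla) with he2 | hlt2
            · -- lam A = u : straight at u
              have hnO := (hcpAt A u h2 (by omega) hu1 (by omega) (by omega) (by omega)).1
                ⟨?_, ?_⟩
              · omega
              · have := hdmono (r - B) (r - A) (by omega); omega
              · rw [hrb]; omega
            · -- lam A > u : turn at lam A
              have hO := (hcpAt A (lam A) h2 (by omega) (by omega) (by omega) (by omega)
                le_rfl).2 (Or.inr ⟨by omega, rfl⟩)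
              obtain ⟨hO1, hO2⟩ := hO
              rw [hrb] at hO2
              omega
          · omega
      -- lam = vert (r - B) label
      right; right; right
      refine ⟨r - B, by omega, by omega, ?_⟩
      funext s
      simp only [DArrow.label]
      split_ifs with hs1 hs2 hs3
      · rw [hs1]; exact h0
      · -- s < B
        exact hup B s (by omega) (by omega) (by omega)
      · -- s = B
        have hsB : s = B := by omega
        rw [hsB]
        have := hdub (r - B)
        omega
      · -- s > B
        have := hanti (B + 1) s (by omega)
        omega
  · -- bottom value positive : in-label or horiz-label
    obtain ⟨u, hudef⟩ : ∃ u', lam r = u' := ⟨_, rfl⟩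
    have hu1 : 1 ≤ u := by omega
    have huk : u ≤ n - r := by have := hanti 0 r (by omega); omega
    by_cases hukk : u = n - r
    · -- full rectangle
      left
      funext s
      simp only [DArrow.label]
      split_ifs with hs
      · have h1 := hanti s r hs
        have h2 := hanti 0 s (by omega)
        omega
      · exact hz s (by omega)
    · -- u ≤ n - r - 1
      by_cases hm0 : lam 1 = u
      · -- constant u
        have hconst : ∀ s, 1 ≤ s → s ≤ r → lam s = u := by
          intro s hs1 hs2
          have h1 := hanti 1 s hs1
          have h2 := hanti s r hs2
          omega
        have hbel : ∀ y, 1 ≤ y → y + 1 ≤ r → u + d y ≤ n - r := by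
          intro y
          induction y with
          | zero => omega
          | succ y ih =>
            intro hy1 hy2
            have hA1 : lam (r - (y + 1)) = u := hconst _ (by omega) (by omega)
            have hA2 : lam (r - (y + 1) + 1) = u := hconst _ (by omega) (by omega)
            have hnO := (hcpAt (r - (y + 1)) u (by omega) (by omega) hu1 (by omega)
              (by omega) (by omega)).1
            rw [show r - (r - (y + 1)) = y + 1 by omega] at hnO
            have hprev : u + d (y + 1 - 1) ≤ n - r + 1 := by
              rcases Nat.eq_or_lt_of_le hy1 with he | hlt
              · rw [show y + 1 - 1 = 0 by omega, hd0]; omega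
              · have := ih (by omega) (by omega)
                rw [show y + 1 - 1 = y by omega]; omega
            have := fun h => hnO h  -- keep
            by_contra hcon
            have hO := hnO ⟨by omega, hprev⟩
            omega
        have hkey : u + d (r - 1) ≤ n - r := by
          rcases Nat.eq_or_lt_of_le hr with he | hlt
          · rw [show r - 1 = 0 by omega, hd0]; omega
          · exact hbel (r - 1) (by omega) (by omega)
        right; right; left
        refine ⟨r, n - r - u, hr, le_rfl, by omega, by rw [hdr]; omega, ?_⟩
        funext s
        simp only [DArrow.label]
        split_ifs with hs1 hs2 hs3
        · rw [hs1]; exact h0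
        · omega
        · rw [hconst s (by omega) hs3]; omega
        · exact hz s (by omega)
      · -- lam 1 > u : one step
        have hr2 : 2 ≤ r := by
          by_contra hcon
          have : r = 1 := by omega
          rw [this] at hudef
          exact hm0 hudef
        have hex : ∃ s, lam s ≤ u := ⟨r, le_of_eq hudef⟩
        set T := Nat.find hex with hTdef
        have hT0 : lam T ≤ u := Nat.find_spec hex
        have hTr : T ≤ r := Nat.find_min' hex (le_of_eq hudef)
        have hT2 : 2 ≤ T := by
          rcases Nat.lt_or_ge T 2 with h | h
          · exfalso
            have h1r := hanti 1 r hr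
            have h01 : T = 0 ∨ T = 1 := by omega
            rcases h01 with h' | h' <;> rw [h'] at hT0 <;> omega
          · exact h
        set m := T - 1 with hmdef
        have hm1 : 1 ≤ m := by omega
        have hmr : m + 1 ≤ r := by omega
        have hmu : u + 1 ≤ lam m := by
          have := Nat.find_min hex (show m < T by omega)
          omega
        have hmid : ∀ s, m + 1 ≤ s → s ≤ r → lam s = u := by
          intro s hs1 hs2
          have h1 : lam s ≤ u := le_trans (hanti T s (by omega)) hT0
          have h2 := hanti s r hs2
          omega
        obtain ⟨w, hwdef⟩ : ∃ w', lam m = w' := ⟨_, rfl⟩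
        have hwk : w ≤ n - r := by have := hanti 0 m (by omega); omega
        have hmidm : lam (m + 1) = u := hmid (m + 1) le_rfl (by omega)
        have hbel : ∀ y, 1 ≤ y → y + 1 ≤ r - m → u + d y ≤ n - r := by
          intro y
          induction y with
          | zero => omega
          | succ y ih =>
            intro hy1 hy2
            have hA1 : lam (r - (y + 1)) = u := hmid _ (by omega) (by omega)
            have hA2 : lam (r - (y + 1) + 1) = u := hmid _ (by omega) (by omega)
            have hnO := (hcpAt (r - (y + 1)) u (by omega) (by omega) hu1 (by omega)
              (by omega) (by omega)).1
            rw [show r - (r - (y + 1)) = y + 1 by omega] at hnO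
            have hprev : u + d (y + 1 - 1) ≤ n - r + 1 := by
              rcases Nat.eq_or_lt_of_le hy1 with he | hlt
              · rw [show y + 1 - 1 = 0 by omega, hd0]; omega
              · have := ih (by omega) (by omega)
                rw [show y + 1 - 1 = y by omega]; omega
            by_contra hcon
            have hO := hnO ⟨by omega, hprev⟩
            omega
        -- turn at (u, m)
        have hO := (hcpAt m u hm1 hmr hu1 (by omega)
          (le_of_eq (hmid (m + 1) le_rfl (by omega))) (by omega)).2
          (Or.inl ⟨hmid (m + 1) le_rfl (by omega), by omega⟩)
        obtain ⟨hO1, hO2⟩ := hO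
        have hkey2 : u + d (r - m - 1) ≤ n - r := by
          rcases eq_or_lt_of_le hmr with he | hlt
          · rw [show r - m - 1 = 0 by omega, hd0]; omega
          · exact hbel (r - m - 1) (by omega) (by omega)
        -- w = u + 1
        have hwu : w = u + 1 := by
          by_contra hcon
          have hnO := (hcpAt m (u + 1) hm1 hmr (by omega) (by omega)
            (by rw [hmid (m + 1) le_rfl (by omega)]; omega) (by omega)).1
            ⟨by omega, by omega⟩
          omega
        -- everything above m equals w
        have hup : ∀ mm A, m ≤ A + mm → 1 ≤ A → A + 1 ≤ m → lam A = w := by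
          intro mm
          induction mm with
          | zero => intro A h1 h2 h3; omega
          | succ mm ih =>
            intro A h1 h2 h3
            have hA1 : lam (A + 1) = w := by
              rcases eq_or_lt_of_le h3 with he | hlt
              · rw [he]; exact hwdef
              · exact ih (A + 1) (by omega) (by omega) (by omega)
            by_contra hne
            have hla : lam (A + 1) ≤ lam A := hanti A (A + 1) (by omega)
            have hlak : lam A ≤ n - r := by have := hanti 0 A (by omega); omega
            have hO := (hcpAt A w h2 (by omega) (by omega) (by omega)
              (le_of_eq hA1) (by omega)).2 (Or.inl ⟨hA1, by omega⟩)
            obtain ⟨hO1', hO2'⟩ := hO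
            have hmm := hdmono (r - m) (r - A - 1) (by omega)
            omega
        right; right; left
        refine ⟨r - m, n - r - u, by omega, by omega, by omega,
          by omega, ?_⟩
        funext s
        simp only [DArrow.label]
        split_ifs with hs1 hs2 hs3
        · rw [hs1]; exact h0
        · -- s ≤ m
          have : lam s = w := by
            rcases eq_or_lt_of_le (show s ≤ m by omega) with he | hlt
            · rw [he]; exact hwdef
            · exact hup m s (by omega) (by omega) (by omega)
          omega
        · -- m < s ≤ r
          have := hmid s (by omega) (by omega)
          omega
        · exact hz s (by omega)
set_option maxHeartbeats 4000000 in
lemma extract (n r : ℕ) (hr : 1 ≤ r) (hrn : r < n)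
    (a : ℕ → DArrow)
    (hvalid : ∀ i, 1 ≤ i → i ≤ n → DArrow.valid n r (a i))
    (hfirst : a 1 = DArrow.inAr) (hlast : a n = DArrow.outAr)
    (hmid : ∀ i, 2 ≤ i → i < n → ∃ t j, a i = DArrow.horiz t j ∨ a i = DArrow.vert t j)
    (hchain : ∀ i, 1 ≤ i → i < n → DArrow.tgtBox n r (a i) = DArrow.srcBox n r (a (i + 1))) :
    ∃ d : ℕ → ℕ, d 0 = 1 ∧ d r = n - r ∧ (∀ s u, s ≤ u → d s ≤ d u) ∧
      (∀ s, 1 ≤ d s) ∧ (∀ s, d s ≤ n - r) ∧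
      (∀ i, 1 ≤ i → i ≤ n → a i = DArrow.inAr ∨ a i = DArrow.outAr ∨
        (∃ t j, 1 ≤ t ∧ t ≤ r ∧ d (t - 1) ≤ j ∧ j + 1 ≤ d t ∧ a i = DArrow.horiz t j) ∨
        (∃ t, 1 ≤ t ∧ t + 1 ≤ r ∧ a i = DArrow.vert t (d t))) ∧
      (∀ t j, 1 ≤ t → t ≤ r → d (t - 1) ≤ j → j + 1 ≤ d t →
        ∃ i, 1 ≤ i ∧ i ≤ n ∧ a i = DArrow.horiz t j) ∧
      (∀ t, 1 ≤ t → t + 1 ≤ r → ∃ i, 1 ≤ i ∧ i ≤ n ∧ a i = DArrow.vert t (d t)) := by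
  classical
  have hk : 1 ≤ n - r := by omega
  have hn2 : 2 ≤ n := by omega
  have hbox2 : DArrow.srcBox n r (a 2) = (1, 1) := by
    have h := hchain 1 le_rfl (by omega)
    rw [hfirst] at h
    exact h.symm
  have hboxn : DArrow.srcBox n r (a n) = (r, n - r) := by rw [hlast]; rfl
  have hstep : ∀ i, 2 ≤ i → i < n →
      (DArrow.srcBox n r (a (i + 1)) =
          ((DArrow.srcBox n r (a i)).1, (DArrow.srcBox n r (a i)).2 + 1) ∧
        a i = DArrow.horiz (DArrow.srcBox n r (a i)).1 (DArrow.srcBox n r (a i)).2) ∨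
      (DArrow.srcBox n r (a (i + 1)) =
          ((DArrow.srcBox n r (a i)).1 + 1, (DArrow.srcBox n r (a i)).2) ∧
        a i = DArrow.vert (DArrow.srcBox n r (a i)).1 (DArrow.srcBox n r (a i)).2) := by
    intro i h2 hilt
    obtain ⟨t, j, hcase⟩ := hmid i h2 hilt
    have hch := hchain i (by omega) hilt
    rcases hcase with hh | hh <;> rw [hh] at hch <;> [left; right] <;> rw [hh] <;>
      exact ⟨by rw [← hch]; rfl, rfl⟩
  have key : ∀ i, 2 ≤ i → i ≤ n →
      (DArrow.srcBox n r (a i)).1 + (DArrow.srcBox n r (a i)).2 = i ∧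
      1 ≤ (DArrow.srcBox n r (a i)).1 ∧ (DArrow.srcBox n r (a i)).1 ≤ r ∧
      1 ≤ (DArrow.srcBox n r (a i)).2 ∧ (DArrow.srcBox n r (a i)).2 ≤ n - r := by
    intro i
    induction i with
    | zero => omega
    | succ i ih =>
      intro h2 hin
      rcases eq_or_lt_of_le h2 with he | hlt
      · rw [show i + 1 = 2 by omega, hbox2]
        simp; omega
      · have hi2 : 2 ≤ i := by omega
        obtain ⟨hs, hb1, hb2, hb3, hb4⟩ := ih hi2 (by omega)
        have hval := hvalid i (by omega) (by omega)
        rcases hstep i hi2 (by omega) with ⟨heq, hae⟩ | ⟨heq, hae⟩ <;>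
          rw [hae, DArrow.valid] at hval <;> rw [heq] <;>
          simp only [Prod.fst, Prod.snd] <;> simp <;> omega
  have hmonoi : ∀ i, 2 ≤ i → ∀ i', i ≤ i' → i' ≤ n →
      (DArrow.srcBox n r (a i)).1 ≤ (DArrow.srcBox n r (a i')).1 ∧
      (DArrow.srcBox n r (a i)).2 ≤ (DArrow.srcBox n r (a i')).2 := by
    intro i h2 i' hle
    induction i', hle using Nat.le_induction with
    | base => intro _; exact ⟨le_rfl, le_rfl⟩
    | succ i' hii' ih =>
      intro hn'
      obtain ⟨p1, p2⟩ := ih (by omega)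
      rcases hstep i' (by omega) (by omega) with ⟨heq, -⟩ | ⟨heq, -⟩ <;>
        rw [heq] <;> exact ⟨by simp; omega, by simp; omega⟩
  -- existence of the vertical arrow in each row t ∈ [1, r-1]
  have hexv : ∀ t, 1 ≤ t → t + 1 ≤ r → ∃ i, 2 ≤ i ∧ i < n ∧
      (DArrow.srcBox n r (a i)).1 = t ∧
      a i = DArrow.vert t (DArrow.srcBox n r (a i)).2 := by
    intro t ht1 ht2
    set P : ℕ → Prop := fun i => 2 ≤ i ∧ (DArrow.srcBox n r (a i)).1 ≤ t with hP
    set i0 := Nat.findGreatest P n with hi0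
    have hP2 : P 2 := ⟨le_rfl, by rw [hbox2]; exact ht1⟩
    have h2le : 2 ≤ i0 := Nat.le_findGreatest hn2 hP2
    have hi0n : i0 ≤ n := Nat.findGreatest_le n
    have hspec : P i0 := Nat.findGreatest_spec hn2 hP2
    have hi0lt : i0 < n := by
      rcases eq_or_lt_of_le hi0n with he | h
      · exfalso
        have := hspec.2
        rw [he, hboxn] at this
        simp at this
        omega
      · exact h
    have hnext : ¬ P (i0 + 1) :=
      Nat.findGreatest_is_greatest (by rw [← hi0]; omega) (by omega)
    have hnrow : t + 1 ≤ (DArrow.srcBox n r (a (i0 + 1))).1 := by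
      by_contra hcon
      exact hnext ⟨by omega, by omega⟩
    rcases hstep i0 h2le hi0lt with ⟨heq, -⟩ | ⟨heq, hae⟩
    · exfalso
      rw [heq] at hnrow
      simp at hnrow
      omega
    · have hrow : (DArrow.srcBox n r (a i0)).1 = t := by
        rw [heq] at hnrow
        simp at hnrow
        omega
      exact ⟨i0, h2le, hi0lt, hrow, by rw [← hrow]; exact hae⟩
  -- uniqueness of vertical arrows per row
  have huniq : ∀ i i' t j j', 2 ≤ i → i < n → 2 ≤ i' → i' < n →
      a i = DArrow.vert t j → a i' = DArrow.vert t j' → i = i' := by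
    intro i i' t j j' h2 hn' h2' hn'' hv hv'
    have hrowi : (DArrow.srcBox n r (a i)).1 = t := by rw [hv]; rfl
    have hrowi' : (DArrow.srcBox n r (a i')).1 = t := by rw [hv']; rfl
    have hrownext : ∀ m, 2 ≤ m → m < n → a m = DArrow.vert t j →
        (DArrow.srcBox n r (a (m + 1))).1 = t + 1 → True := fun _ _ _ _ _ => trivial
    by_contra hne
    rcases Nat.lt_or_ge i i' with hlt | hge
    · have hchi := hchain i (by omega) hn'
      rw [hv] at hchi
      have hrownext1 : (DArrow.srcBox n r (a (i + 1))).1 = t + 1 := by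
        rw [← hchi]; rfl
      have := (hmonoi (i + 1) (by omega) i' (by omega) (by omega)).1
      omega
    · have hlt : i' < i := by omega
      have hchi := hchain i' (by omega) hn''
      rw [hv'] at hchi
      have hrownext1 : (DArrow.srcBox n r (a (i' + 1))).1 = t + 1 := by
        rw [← hchi]; rfl
      have := (hmonoi (i' + 1) (by omega) i (by omega) (by omega)).1
      omega
  -- definition of d
  set d : ℕ → ℕ := fun t =>
    if h : 1 ≤ t ∧ t + 1 ≤ r then
      (DArrow.srcBox n r (a (hexv t h.1 h.2).choose)).2
    else if t = 0 then 1 else n - r with hd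
  have hd0 : d 0 = 1 := by rw [hd]; norm_num
  have hdr : d r = n - r := by rw [hd]; simp; omega
  have hdbig : ∀ t, r ≤ t → d t = n - r := by
    intro t ht; simp only [hd]
    rw [dif_neg (by omega), if_neg (by omega)]
  have hdval : ∀ t (h1 : 1 ≤ t) (h2 : t + 1 ≤ r),
      d t = (DArrow.srcBox n r (a (hexv t h1 h2).choose)).2 := by
    intro t h1 h2
    simp only [hd]
    rw [dif_pos ⟨h1, h2⟩]
  -- d t is the column of *any* vertical arrow in row t
  have hdchar : ∀ t j i, 2 ≤ i → i < n → a i = DArrow.vert t j → d t = j := by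
    intro t j i h2 hn' hv
    have hval := hvalid i (by omega) (by omega)
    rw [hv, DArrow.valid] at hval
    have hdv := hdval t (by omega) (by omega)
    obtain ⟨hc2, hcn, hcrow, hcv⟩ := (hexv t (by omega) (by omega)).choose_spec
    have := huniq _ _ _ _ _ hc2 hcn h2 hn' hcv hv
    rw [hdv, this, hv]
    rfl
  have hwit : ∀ t (h1 : 1 ≤ t) (h2 : t + 1 ≤ r), ∃ i, 2 ≤ i ∧ i < n ∧
      (DArrow.srcBox n r (a i)).1 = t ∧ (DArrow.srcBox n r (a i)).2 = d t ∧
      a i = DArrow.vert t (d t) := by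
    intro t h1 h2
    obtain ⟨i, hi2, hin, hrow, hv⟩ := hexv t h1 h2
    have := hdchar t _ i hi2 hin hv
    exact ⟨i, hi2, hin, hrow, this.symm, by rw [hv, this]⟩
  have hdlb : ∀ s, 1 ≤ d s := by
    intro s
    by_cases hs : 1 ≤ s ∧ s + 1 ≤ r
    · obtain ⟨i, hi2, hin, _, hcol, _⟩ := hwit s hs.1 hs.2
      have := (key i hi2 (by omega)).2.2.2.1
      omega
    · simp only [hd]
      rw [dif_neg hs]
      split_ifs <;> omega
  have hdub : ∀ s, d s ≤ n - r := by
    intro s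
    by_cases hs : 1 ≤ s ∧ s + 1 ≤ r
    · obtain ⟨i, hi2, hin, _, hcol, _⟩ := hwit s hs.1 hs.2
      have := (key i hi2 (by omega)).2.2.2.2
      omega
    · simp only [hd]
      rw [dif_neg hs]
      split_ifs <;> omega
  have hdmono : ∀ s u, s ≤ u → d s ≤ d u := by
    intro s u hsu
    rcases eq_or_lt_of_le hsu with rfl | hlt
    · exact le_rfl
    by_cases hu : 1 ≤ u ∧ u + 1 ≤ r
    · by_cases hs : 1 ≤ s ∧ s + 1 ≤ r
      · obtain ⟨i, hi2, hin, hrow, hcol, _⟩ := hwit s hs.1 hs.2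
        obtain ⟨i', hi2', hin', hrow', hcol', _⟩ := hwit u hu.1 hu.2
        have hii' : i ≤ i' := by
          by_contra hcon
          have := (hmonoi i' hi2' i (by omega) (by omega)).1
          omega
        have := (hmonoi i hi2 i' hii' (by omega)).2
        omega
      · have hs0 : s = 0 := by omega
        rw [hs0, hd0]; exact hdlb u
    · by_cases hur : r ≤ u
      · rw [hdbig u hur]; exact hdub s
      · have : u = 0 := by omega
        omega
  refine ⟨d, hd0, hdr, hdmono, hdlb, hdub, ?_, ?_, ?_⟩
  · -- F1 : classification of every arrow on the path
    intro i hi1 hin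
    rcases eq_or_lt_of_le hi1 with he | hi2
    · left; rw [← he]; exact hfirst
    rcases eq_or_lt_of_le hin with he | hiltn
    · right; left; rw [he]; exact hlast
    have hi2' : 2 ≤ i := hi2
    obtain ⟨t, j, hcase⟩ := hmid i hi2' hiltn
    have hval := hvalid i (by omega) (by omega)
    rcases hcase with hh | hv
    · right; right; left
      rw [hh, DArrow.valid] at hval
      obtain ⟨v1, v2, v3, v4⟩ := hval
      have hboxi : DArrow.srcBox n r (a i) = (t, j) := by rw [hh]; rfl
      refine ⟨t, j, v1, v2, ?_, ?_, hh⟩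
      · -- d (t-1) ≤ j
        rcases eq_or_lt_of_le v1 with he1 | hlt1
        · rw [← he1]; simpa [hd0] using v3
        · obtain ⟨i', hi2'', hin', hrow', hcol', hv'⟩ := hwit (t - 1) (by omega) (by omega)
          have hchi' := hchain i' (by omega) hin'
          rw [hv'] at hchi'
          have hrownext : DArrow.srcBox n r (a (i' + 1)) = (t - 1 + 1, d (t - 1)) := by
            rw [← hchi']; rfl
          have hii : i' + 1 ≤ i := by
            by_contra hcon
            have hmm := (hmonoi i hi2' i' (by omega) (by omega)).1
            rw [hboxi, hrow'] at hmm
            simp at hmm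
            omega
          have hmm := (hmonoi (i' + 1) (by omega) i (by omega) (by omega)).2
          rw [hrownext, hboxi] at hmm
          simp at hmm
          omega
      · -- j + 1 ≤ d t
        rcases eq_or_lt_of_le v2 with he2 | hlt2
        · rw [he2, hdr]; omega
        · obtain ⟨i', hi2'', hin', hrow', hcol', hv'⟩ := hwit t (by omega) (by omega)
          have hii' : i < i' := by
            by_contra hcon
            rcases eq_or_lt_of_le (not_lt.1 hcon) with he | hlt
            · rw [he] at hv'; rw [hv'] at hh; simp at hh
            · have hchi' := hchain i' (by omega) (by omega)
              rw [hv'] at hchi'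
              have h1 : (DArrow.srcBox n r (a (i' + 1))).1 = t + 1 := by
                rw [← hchi']; rfl
              have := (hmonoi (i' + 1) (by omega) i (by omega) (by omega)).1
              rw [hboxi] at this
              simp at this
              omega
          have hchi := hchain i (by omega) hiltn
          rw [hh] at hchi
          have hcolnext : DArrow.srcBox n r (a (i + 1)) = (t, j + 1) := by
            rw [← hchi]; rfl
          have := (hmonoi (i + 1) (by omega) i' (by omega) (by omega)).2
          rw [hcolnext] at this
          simp at this
          omega
    · right; right; right
      rw [hv, DArrow.valid] at hval
      have := hdchar t j i hi2' hiltn hv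
      exact ⟨t, hval.1, hval.2.1, by rw [hv, this]⟩
  · -- F2 : every horizontal arrow between the descents occurs
    intro t j ht1 htr hd1 hd2
    have hj1 : 1 ≤ j := le_trans (hdlb (t - 1)) hd1
    have hjub : j + 1 ≤ n - r := le_trans hd2 (hdub t)
    have hi2 : 2 ≤ t + j := by omega
    have hiltn : t + j < n := by
      rcases eq_or_lt_of_le htr with he | hlt
      · rw [he] at hd2 ⊢; rw [hdr] at hd2; omega
      · obtain ⟨i', hi2', hin', hrow', hcol', _⟩ := hwit t (by omega) (by omega)
        have hsum' := (key i' hi2' (by omega)).1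
        omega
    have hrowub : (DArrow.srcBox n r (a (t + j))).1 ≤ t := by
      rcases eq_or_lt_of_le htr with he | hlt
      · have := (key (t + j) hi2 (by omega)).2.2.1; omega
      · obtain ⟨i', hi2', hin', hrow', hcol', _⟩ := hwit t (by omega) (by omega)
        have hsum' := (key i' hi2' (by omega)).1
        have hmm := (hmonoi (t + j) hi2 i' (by omega) (by omega)).1
        omega
    have hrowlb : t ≤ (DArrow.srcBox n r (a (t + j))).1 := by
      rcases eq_or_lt_of_le ht1 with he | hlt
      · have := (key (t + j) hi2 (by omega)).2.1; omega
      · obtain ⟨i', hi2', hin', hrow', hcol', hv'⟩ := hwit (t - 1) (by omega) (by omega)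
        have hsum' := (key i' hi2' (by omega)).1
        have hchi' := hchain i' (by omega) hin'
        rw [hv'] at hchi'
        have hrownext : DArrow.srcBox n r (a (i' + 1)) = (t - 1 + 1, d (t - 1)) := by
          rw [← hchi']; rfl
        have hmm := (hmonoi (i' + 1) (by omega) (t + j) (by omega) (by omega)).1
        rw [hrownext] at hmm
        simp at hmm
        omega
    have hsum := (key (t + j) hi2 (by omega)).1
    have hrow : (DArrow.srcBox n r (a (t + j))).1 = t := le_antisymm hrowub hrowlb
    have hcol : (DArrow.srcBox n r (a (t + j))).2 = j := by omega
    obtain ⟨t', j', hcase⟩ := hmid (t + j) hi2 hiltn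
    rcases hcase with hh | hv
    · rw [hh] at hrow hcol
      simp [DArrow.srcBox] at hrow hcol
      exact ⟨t + j, by omega, by omega, by rw [hh, hrow, hcol]⟩
    · exfalso
      rw [hv] at hrow hcol
      simp [DArrow.srcBox] at hrow hcol
      subst hrow
      subst hcol
      have hdc := hdchar _ _ _ hi2 hiltn hv
      omega
  · -- F2 : vertical arrows occur
    intro t ht1 ht2
    obtain ⟨i, hi2, hin, _, _, hv⟩ := hwit t ht1 ht2
    exact ⟨i, by omega, by omega, hv⟩
/-- the labels of the arrows along any dual path (a path in the dual quiver
from the in-arrow to the out-arrow) form the set of paths of some crossing diagram. -/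
theorem dual_path_labels_form_crossing_diagram (n r : ℕ) (hr : 1 ≤ r) (hrn : r < n)
    (a : ℕ → DArrow)
    (hvalid : ∀ i, 1 ≤ i → i ≤ n → DArrow.valid n r (a i))
    (hfirst : a 1 = DArrow.inAr) (hlast : a n = DArrow.outAr)
    (hmid : ∀ i, 2 ≤ i → i < n → ∃ t j, a i = DArrow.horiz t j ∨ a i = DArrow.vert t j)
    (hchain : ∀ i, 1 ≤ i → i < n → DArrow.tgtBox n r (a i) = DArrow.srcBox n r (a (i + 1))) :
    ∃ c : ℕ × ℕ → Bool,
      {lam : ℕ → ℕ | ∃ i, 1 ≤ i ∧ i ≤ n ∧ lam = DArrow.label n r (a i)} =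
      {lam : ℕ → ℕ | IsPartition n r lam ∧ IsCrossingPath n r c lam} := by
  obtain ⟨d, hd0, hdr, hdmono, hdlb, hdub, hF1, hF2h, hF2v⟩ :=
    extract n r hr hrn a hvalid hfirst hlast hmid hchain
  refine ⟨cD (n - r) d, ?_⟩
  ext lam
  simp only [Set.mem_setOf_eq]
  constructor
  · rintro ⟨i, hi1, hin, rfl⟩
    rcases hF1 i hi1 hin with he | he | ⟨t, j, ht1, htr, hj1, hj2, he⟩ | ⟨t, ht1, ht2, he⟩
    · rw [he]
      exact ⟨part_in n r, CP_of n r d _ (part_in n r).2.2 (cpiff_in n r d)⟩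
    · rw [he]
      exact ⟨part_out n r, CP_of n r d _ (part_out n r).2.2 (cpiff_out n r d)⟩
    · rw [he]
      have hp := part_horiz n r t j ht1 htr (le_trans (hdlb _) hj1) (le_trans hj2 (hdub t))
      exact ⟨hp, CP_of n r d _ hp.2.2
        (cpiff_horiz n r t j d hdmono ht1 htr (le_trans (hdlb _) hj1)
          (le_trans hj2 (hdub t)) hj1 hj2)⟩
    · rw [he]
      have hp := part_vert n r t (d t) ht1 ht2 (hdlb t) (hdub t)
      exact ⟨hp, CP_of n r d _ hp.2.2
        (cpiff_vert n r t (d t) d hdmono ht1 ht2 (hdlb t) (hdub t) rfl)⟩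
  · rintro ⟨hpart, hcp⟩
    have hcpiff := CP_to n r d lam hpart.2.2 hcp
    rcases classify n r hr hrn d hd0 hdr hdmono hdlb hdub lam hpart hcpiff with
      he | he | ⟨t, j, ht1, htr, hj1, hj2, he⟩ | ⟨t, ht1, ht2, he⟩
    · exact ⟨1, le_rfl, by omega, by rw [hfirst, he]⟩
    · exact ⟨n, by omega, le_rfl, by rw [hlast, he]⟩
    · obtain ⟨i, hi1, hin, hai⟩ := hF2h t j ht1 htr hj1 hj2
      exact ⟨i, hi1, hin, by rw [hai, he]⟩
    · obtain ⟨i, hi1, hin, hai⟩ := hF2v t ht1 ht2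
      exact ⟨i, hi1, hin, by rw [hai, he]⟩
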